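/- arXiv:2212.09933 — 2 statements merged into one kernel-verified Lean document; each statement's English description precedes it below -/
import Mathlib

section
/- Let n be even, n ≥ 2, and fix a family (f_x)_{x∈L^n_n} of outcomes on the maximal isotropic subspaces of (ZMod 2)^{2n}. Let Q be the number of ordered pairs (x,y) ∈ L^n_n × L^n_n with dim(x∩y) = n/2, and let s be the fraction of such pairs for which f_x and f_y are consistent. Let T_n be the number of contradiction triangles: triples (w,x,y) with w ∈ L^n_1, x,y ∈ L^n_n, w ⊆ x∩y, dim(x∩y)=n/2, and f_x(v) ≠ f_y(v) for the nonzero vector v of w. Then T_n ≥ (1 − s) · Q · 2^{n/2 − 1}. -/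
open Finset

set_option maxHeartbeats 1000000
set_option synthInstance.maxHeartbeats 200000

abbrev F2 := ZMod 2
/-- `F2^{2n}`, split into the first and last `n` coordinates. -/
abbrev PV (n : ℕ) := (Fin n → F2) × (Fin n → F2)

/-- Symplectic product on `F2^{2n}`: zero iff `a₁·b₂ = a₂·b₁`. -/
def symp {n : ℕ} (a b : PV n) : F2 :=
  (∑ i, a.1 i * b.2 i) + (∑ i, a.2 i * b.1 i)

/-- A subspace is isotropic if the symplectic product vanishes on it. -/
def IsIsotropic {n : ℕ} (S : Submodule F2 (PV n)) : Prop :=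
  ∀ x ∈ S, ∀ y ∈ S, symp x y = 0

/-- `Lset n k` = `L^n_k`, the set of `k`-dimensional isotropic subspaces of `F2^{2n}`. -/
def Lset (n k : ℕ) : Set (Submodule F2 (PV n)) :=
  {S | IsIsotropic S ∧ Module.finrank F2 S = k}

/-- Integer lift of a vector over `F2`, with values in `{0,1} ⊆ ℤ`. -/
def liftZ {n : ℕ} (v : Fin n → F2) : Fin n → ℤ := fun i => ((v i).val : ℤ)

def dotZ {n : ℕ} (a b : Fin n → ℤ) : ℤ := ∑ i, a i * b i

/-- The phase `i^{x̂₁·x̂₂} · i^{ŷ₁·ŷ₂} · i^{−((x+y)^^₁·(x+y)^^₂)} · (−1)^{x̂₂·ŷ₁}`. -/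
noncomputable def phase {n : ℕ} (x y : PV n) : ℂ :=
  Complex.I ^ (dotZ (liftZ x.1) (liftZ x.2)) *
  Complex.I ^ (dotZ (liftZ y.1) (liftZ y.2)) *
  Complex.I ^ (-(dotZ (liftZ (x + y).1) (liftZ (x + y).2))) *
  (-1 : ℂ) ^ (dotZ (liftZ x.2) (liftZ y.1))

/-- `w(x,y) ∈ {0,1} ⊆ F2`: zero iff the phase equals `1`. -/
noncomputable def wght {n : ℕ} (x y : PV n) : F2 :=
  if phase x y = 1 then 0 else 1

/-- An outcome of an isotropic subspace `S` is `f : S → F2` with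
`f(x+y) = f(x)+f(y)+w(x,y)`. -/
def IsOutcome {n : ℕ} (S : Submodule F2 (PV n)) (f : S → F2) : Prop :=
  ∀ x y : S, f (x + y) = f x + f y + wght (x : PV n) (y : PV n)

/-- Two outcomes are consistent if they agree on the intersection of their domains. -/
def ConsistentOn {n : ℕ} {S₁ S₂ : Submodule F2 (PV n)} (f₁ : S₁ → F2) (f₂ : S₂ → F2) : Prop :=
  ∀ v (h1 : v ∈ S₁) (h2 : v ∈ S₂), f₁ ⟨v, h1⟩ = f₂ ⟨v, h2⟩

/-- Ordered pairs of maximal isotropic subspaces of `F2^{2n}` intersecting in dim `n/2`. -/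
def halfPairs (n : ℕ) : Set (Submodule F2 (PV n) × Submodule F2 (PV n)) :=
  {p | p.1 ∈ Lset n n ∧ p.2 ∈ Lset n n ∧ Module.finrank F2 ↥(p.1 ⊓ p.2) = n / 2}

/-- The pairs in `halfPairs` on which the assigned outcomes are consistent. -/
def consistentHalfPairs (n : ℕ) (f : (S : Submodule F2 (PV n)) → (S → F2)) :
    Set (Submodule F2 (PV n) × Submodule F2 (PV n)) :=
  {p | p ∈ halfPairs n ∧ ConsistentOn (f p.1) (f p.2)}

/-- Contradiction triangles: triples `(w,x,y)` with `w ∈ L^n_1`, `x,y ∈ L^n_n`,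
`w ⊆ x ∩ y`, `dim(x ∩ y) = n/2`, and `f_x(v) ≠ f_y(v)` for the nonzero vector `v` of `w`. -/
def contradictionTriangles (n : ℕ) (f : (S : Submodule F2 (PV n)) → (S → F2)) :
    Set (Submodule F2 (PV n) × Submodule F2 (PV n) × Submodule F2 (PV n)) :=
  {t | t.1 ∈ Lset n 1 ∧ t.2.1 ∈ Lset n n ∧ t.2.2 ∈ Lset n n ∧
    t.1 ≤ t.2.1 ⊓ t.2.2 ∧ Module.finrank F2 ↥(t.2.1 ⊓ t.2.2) = n / 2 ∧
    ∃ (h1 : t.1 ≤ t.2.1) (h2 : t.1 ≤ t.2.2), ∃ v, ∃ (hv : v ∈ t.1), v ≠ 0 ∧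
      f t.2.1 ⟨v, h1 hv⟩ ≠ f t.2.2 ⟨v, h2 hv⟩}


section Aux

open Submodule Module

/-- Case analysis for `F2`. -/
lemma F2.zero_or_one : ∀ a : F2, a = 0 ∨ a = 1 := by decide

lemma F2.ne_of_add_ne_zero : ∀ a b : F2, a + b ≠ 0 → a ≠ b := by decide

lemma F2.add_ne_zero_of_ne : ∀ a b : F2, a ≠ b → a + b ≠ 0 := by decide

lemma F2.eq_one_of_ne_zero : ∀ a : F2, a ≠ 0 → a = 1 := by decide

lemma F2.add_self (a : F2) : a + a = 0 := by
  rcases F2.zero_or_one a with rfl | rfl <;> decide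

lemma phase_zero_zero {n : ℕ} : phase (0 : PV n) (0 : PV n) = 1 := by
  simp [phase, dotZ, liftZ]

lemma wght_zero_zero {n : ℕ} : wght (0 : PV n) (0 : PV n) = 0 := by
  simp [wght, phase_zero_zero]

lemma outcome_zero {n : ℕ} {S : Submodule F2 (PV n)} {f : S → F2}
    (h : IsOutcome S f) : f 0 = 0 := by
  have h0 := h 0 0
  rw [add_zero] at h0
  have : ((0 : S) : PV n) = 0 := rfl
  rw [this, wght_zero_zero, add_zero] at h0
  rcases F2.zero_or_one (f 0) with h | h
  · exact h
  · rw [h] at h0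
    exact absurd h0 (by decide)

/-- The difference of two outcomes, on the intersection of their domains. -/
def gdiff {n : ℕ} (f : (S : Submodule F2 (PV n)) → (S → F2))
    (x y : Submodule F2 (PV n)) (u : ↥(x ⊓ y)) : F2 :=
  f x ⟨u, (Submodule.mem_inf.mp u.2).1⟩ + f y ⟨u, (Submodule.mem_inf.mp u.2).2⟩

lemma gdiff_add {n : ℕ} {f : (S : Submodule F2 (PV n)) → (S → F2)}
    {x y : Submodule F2 (PV n)} (hfx : IsOutcome x (f x)) (hfy : IsOutcome y (f y))
    (u v : ↥(x ⊓ y)) :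
    gdiff f x y (u + v) = gdiff f x y u + gdiff f x y v := by
  unfold gdiff
  have hx' := hfx ⟨u, (Submodule.mem_inf.mp u.2).1⟩ ⟨v, (Submodule.mem_inf.mp v.2).1⟩
  have hy' := hfy ⟨u, (Submodule.mem_inf.mp u.2).2⟩ ⟨v, (Submodule.mem_inf.mp v.2).2⟩
  have ex : (⟨u, (Submodule.mem_inf.mp u.2).1⟩ + ⟨v, (Submodule.mem_inf.mp v.2).1⟩ : x)
      = ⟨(u + v : ↥(x ⊓ y)), (Submodule.mem_inf.mp (u+v).2).1⟩ := by
    apply Subtype.ext; rfl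
  have ey : (⟨u, (Submodule.mem_inf.mp u.2).2⟩ + ⟨v, (Submodule.mem_inf.mp v.2).2⟩ : y)
      = ⟨(u + v : ↥(x ⊓ y)), (Submodule.mem_inf.mp (u+v).2).2⟩ := by
    apply Subtype.ext; rfl
  rw [ex] at hx'
  rw [ey] at hy'
  have hw := F2.add_self (wght (u : PV n) (v : PV n))
  linear_combination hx' + hy' + hw

lemma gdiff_zero {n : ℕ} {f : (S : Submodule F2 (PV n)) → (S → F2)}
    {x y : Submodule F2 (PV n)} (hfx : IsOutcome x (f x)) (hfy : IsOutcome y (f y)) :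
    gdiff f x y 0 = 0 := by
  unfold gdiff
  have ex : (⟨(0 : ↥(x ⊓ y)), (Submodule.mem_inf.mp (0:↥(x⊓y)).2).1⟩ : x) = 0 := by
    apply Subtype.ext; rfl
  have ey : (⟨(0 : ↥(x ⊓ y)), (Submodule.mem_inf.mp (0:↥(x⊓y)).2).2⟩ : y) = 0 := by
    apply Subtype.ext; rfl
  rw [ex, ey, outcome_zero hfx, outcome_zero hfy, add_zero]

lemma isotropic_of_le {n : ℕ} {S T : Submodule F2 (PV n)} (h : S ≤ T)
    (hT : IsIsotropic T) : IsIsotropic S :=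
  fun a ha b hb => hT a (h ha) b (h hb)

lemma span_singleton_inj {n : ℕ} {a b : PV n} (ha : a ≠ 0)
    (h : Submodule.span F2 {a} = Submodule.span F2 {b}) : a = b := by
  have hm : a ∈ Submodule.span F2 {b} := h ▸ Submodule.mem_span_singleton_self a
  obtain ⟨c, rfl⟩ := Submodule.mem_span_singleton.mp hm
  rcases F2.zero_or_one c with rfl | rfl
  · simp at ha
  · simp

/-- Key cardinality computation: if the two outcomes are inconsistent, exactly half of the
intersection disagrees. -/
lemma card_gdiff_ne {n : ℕ} (hn : 1 ≤ n / 2) (f : (S : Submodule F2 (PV n)) → (S → F2))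
    (x y : Submodule F2 (PV n)) (hfx : IsOutcome x (f x)) (hfy : IsOutcome y (f y))
    (hd : Module.finrank F2 ↥(x ⊓ y) = n / 2) (hnc : ¬ ConsistentOn (f x) (f y)) :
    Nat.card {u : ↥(x ⊓ y) // gdiff f x y u ≠ 0} = 2 ^ (n / 2 - 1) := by
  classical
  simp only [ConsistentOn, not_forall] at hnc
  obtain ⟨v, h1, h2, hne⟩ := hnc
  set u₀ : ↥(x ⊓ y) := ⟨v, Submodule.mem_inf.mpr ⟨h1, h2⟩⟩ with hu₀
  have hg1 : gdiff f x y u₀ = 1 := by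
    apply F2.eq_one_of_ne_zero
    exact F2.add_ne_zero_of_ne _ _ hne
  have key : ∀ u : ↥(x ⊓ y), gdiff f x y u ≠ 0 ↔ gdiff f x y (u + u₀) = 0 := by
    intro u
    rw [gdiff_add hfx hfy, hg1]
    rcases F2.zero_or_one (gdiff f x y u) with h | h <;> rw [h] <;> decide
  let e : {u : ↥(x ⊓ y) // gdiff f x y u ≠ 0} ≃ {u : ↥(x ⊓ y) // gdiff f x y u = 0} :=
    Equiv.subtypeEquiv (Equiv.addRight u₀) (fun a => by simpa using key a)
  have hcongr : Nat.card {u : ↥(x ⊓ y) // gdiff f x y u ≠ 0}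
      = Nat.card {u : ↥(x ⊓ y) // gdiff f x y u = 0} := Nat.card_congr e
  have hsum : Nat.card {u : ↥(x ⊓ y) // gdiff f x y u = 0} +
      Nat.card {u : ↥(x ⊓ y) // gdiff f x y u ≠ 0} = Nat.card ↥(x ⊓ y) := by
    rw [← Nat.card_sum]
    exact Nat.card_congr (Equiv.sumCompl (fun u : ↥(x ⊓ y) => gdiff f x y u = 0))
  have htot : Nat.card ↥(x ⊓ y) = 2 ^ (n / 2) := by
    rw [Nat.card_eq_fintype_card]
    have hc := card_eq_pow_finrank (K := F2) (V := ↥(x ⊓ y))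
    rwa [ZMod.card, hd] at hc
  have h2pow : 2 ^ (n / 2) = 2 ^ (n / 2 - 1) * 2 := by
    rw [← pow_succ]
    congr 1
    omega
  omega

lemma triangle_mem {n : ℕ} (f : (S : Submodule F2 (PV n)) → (S → F2))
    {x y : Submodule F2 (PV n)} (hx : x ∈ Lset n n) (hy : y ∈ Lset n n)
    (hfx : IsOutcome x (f x)) (hfy : IsOutcome y (f y))
    (hd : Module.finrank F2 ↥(x ⊓ y) = n / 2)
    (u : ↥(x ⊓ y)) (hu : gdiff f x y u ≠ 0) :
    (Submodule.span F2 {(u : PV n)}, x, y) ∈ contradictionTriangles n f := by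
  have hu0 : (u : PV n) ≠ 0 := by
    intro h
    apply hu
    have : u = 0 := Subtype.ext h
    rw [this, gdiff_zero hfx hfy]
  have hux : (u : PV n) ∈ x := (Submodule.mem_inf.mp u.2).1
  have huy : (u : PV n) ∈ y := (Submodule.mem_inf.mp u.2).2
  have hsx : Submodule.span F2 {(u : PV n)} ≤ x :=
    Submodule.span_le.mpr (Set.singleton_subset_iff.mpr hux)
  have hsy : Submodule.span F2 {(u : PV n)} ≤ y :=
    Submodule.span_le.mpr (Set.singleton_subset_iff.mpr huy)
  refine ⟨⟨isotropic_of_le hsx hx.1, finrank_span_singleton hu0⟩, hx, hy,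
    le_inf hsx hsy, hd, hsx, hsy, (u : PV n), Submodule.mem_span_singleton_self _, hu0, ?_⟩
  have := F2.ne_of_add_ne_zero _ _ hu
  exact this

end Aux

/-- **Lower bound on contradiction triangles.** `T_n ≥ (1 − s)·Q·2^{n/2−1}`, where `Q` is the
number of ordered pairs of maximal isotropic subspaces intersecting in dimension `n/2`, and
`s` is the fraction of such pairs with consistent outcomes. -/
theorem contradiction_triangle_count :
    ∀ n : ℕ, Even n → 2 ≤ n →
      ∀ f : (S : Submodule F2 (PV n)) → (S → F2),
        (∀ S ∈ Lset n n, IsOutcome S (f S)) →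
        (Nat.card (contradictionTriangles n f) : ℝ) ≥
          (1 - (Nat.card (consistentHalfPairs n f) : ℝ) / (Nat.card (halfPairs n) : ℝ)) *
            (Nat.card (halfPairs n) : ℝ) * 2 ^ (n / 2 - 1) := by
  intro n hneven hn2 f hf
  classical
  have hn1 : 1 ≤ n / 2 := by omega
  have hsub : consistentHalfPairs n f ⊆ halfPairs n := fun p hp => hp.1
  have hCQ : Nat.card (consistentHalfPairs n f) ≤ Nat.card (halfPairs n) :=
    Nat.card_mono (Set.toFinite _) hsub
  set I : Set (Submodule F2 (PV n) × Submodule F2 (PV n)) :=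
    halfPairs n \ consistentHalfPairs n f with hI
  have hIcard : Nat.card I = Nat.card (halfPairs n) - Nat.card (consistentHalfPairs n f) := by
    rw [Nat.card_coe_set_eq, Nat.card_coe_set_eq, Nat.card_coe_set_eq,
      Set.ncard_diff hsub]
  -- the injection from (inconsistent pair, disagreement vector) into triangles
  haveI : Fintype ↥I := Fintype.ofFinite _
  have hmemI : ∀ p : ↥I, p.1.1 ∈ Lset n n ∧ p.1.2 ∈ Lset n n ∧
      Module.finrank F2 ↥(p.1.1 ⊓ p.1.2) = n / 2 ∧
      ¬ ConsistentOn (f p.1.1) (f p.1.2) := by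
    intro p
    obtain ⟨hp1, hp2⟩ := p.2
    exact ⟨hp1.1, hp1.2.1, hp1.2.2, fun hc => hp2 ⟨hp1, hc⟩⟩
  let D : ↥I → Type := fun p =>
    {u : ↥(p.1.1 ⊓ p.1.2) // gdiff f p.1.1 p.1.2 u ≠ 0}
  let Φ : (Σ p : ↥I, D p) → ↥(contradictionTriangles n f) := fun z =>
    ⟨(Submodule.span F2 {(z.2.1 : PV n)}, z.1.1.1, z.1.1.2),
      triangle_mem f (hmemI z.1).1 (hmemI z.1).2.1
        (hf _ (hmemI z.1).1) (hf _ (hmemI z.1).2.1) (hmemI z.1).2.2.1 z.2.1 z.2.2⟩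
  have hΦinj : Function.Injective Φ := by
    rintro ⟨⟨⟨x, y⟩, hp⟩, u, hu⟩ ⟨⟨⟨x', y'⟩, hq⟩, w, hw⟩ h
    simp only [Φ, Subtype.mk.injEq, Prod.mk.injEq] at h
    obtain ⟨hspan, hxx, hyy⟩ := h
    subst hxx; subst hyy
    have hu0 : (u : PV n) ≠ 0 := by
      intro h0
      apply hu
      have : u = 0 := Subtype.ext h0
      rw [this]
      exact gdiff_zero (hf _ (hmemI ⟨(x, y), hp⟩).1) (hf _ (hmemI ⟨(x, y), hp⟩).2.1)
    have huw : (u : PV n) = (w : PV n) := span_singleton_inj hu0 hspan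
    have : u = w := Subtype.ext huw
    subst this
    rfl
  have hcard_le : Nat.card (Σ p : ↥I, D p) ≤ Nat.card (contradictionTriangles n f) :=
    Nat.card_le_card_of_injective Φ hΦinj
  haveI : ∀ p : ↥I, Fintype (D p) := fun p => Fintype.ofFinite _
  have hsigma : Nat.card (Σ p : ↥I, D p) = Nat.card I * 2 ^ (n / 2 - 1) := by
    rw [Nat.card_eq_fintype_card, Fintype.card_sigma]
    have hDp : ∀ p : ↥I, Fintype.card (D p) = 2 ^ (n / 2 - 1) := by
      intro p
      rw [← Nat.card_eq_fintype_card]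
      exact card_gdiff_ne hn1 f _ _ (hf _ (hmemI p).1) (hf _ (hmemI p).2.1)
        (hmemI p).2.2.1 (hmemI p).2.2.2
    rw [Finset.sum_congr rfl (fun p _ => hDp p), Finset.sum_const, smul_eq_mul,
      Nat.card_eq_fintype_card, Finset.card_univ]
  have key : (Nat.card (halfPairs n) - Nat.card (consistentHalfPairs n f)) * 2 ^ (n / 2 - 1)
      ≤ Nat.card (contradictionTriangles n f) := by
    rw [← hIcard, ← hsigma]
    exact hcard_le
  by_cases hQ0 : Nat.card (halfPairs n) = 0
  · have hC0 : Nat.card (consistentHalfPairs n f) = 0 := by omega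
    rw [hQ0, hC0]
    simp only [Nat.cast_zero, mul_zero, zero_mul]
    positivity
  · have hQne : (Nat.card (halfPairs n) : ℝ) ≠ 0 := Nat.cast_ne_zero.mpr hQ0
    rw [ge_iff_le, sub_mul, one_mul, div_mul_cancel₀ _ hQne, ← Nat.cast_sub hCQ]
    exact_mod_cast key
end

section
/- For every n ≥ 1 and 0 ≤ k ≤ n, the number of k-dimensional isotropic subspaces of (ZMod 2)^{2n} equals ∏_{i=0}^{k−1} (2^{2n−i} − 2^i)/(2^k − 2^i). -/
open Finset
open Module Submodule

def sympB (n : ℕ) : LinearMap.BilinForm F2 (PV n) :=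
  LinearMap.mk₂ F2 symp
    (by intro a a' b; simp [symp, add_mul, Finset.sum_add_distrib]; ring)
    (by intro c a b; simp [symp, Finset.mul_sum, mul_add, mul_assoc, mul_left_comm])
    (by intro a b b'; simp [symp, mul_add, Finset.sum_add_distrib]; ring)
    (by intro c a b; simp [symp, Finset.mul_sum, mul_add, mul_assoc, mul_left_comm])
lemma sympB_apply {n : ℕ} (a b : PV n) : sympB n a b = symp a b := rfl
lemma symp_comm {n : ℕ} (a b : PV n) : symp a b = symp b a := by
  simp [symp, mul_comm]; ring
lemma sympB_symm {n : ℕ} : (sympB n).IsSymm := ⟨fun a b => by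
  simpa [sympB_apply] using (symp_comm a b)⟩
lemma sympB_refl {n : ℕ} : (sympB n).IsRefl := sympB_symm.isRefl
lemma sympB_nondeg {n : ℕ} : (sympB n).Nondegenerate := by
  refine LinearMap.BilinForm.Nondegenerate.ofSeparatingLeft ?_
  intro a ha
  have h1 : ∀ i, a.1 i = 0 := by
    intro i
    have := ha (0, Pi.single i 1)
    simpa [sympB_apply, symp, Pi.single_apply, Finset.mul_sum] using this
  have h2 : ∀ i, a.2 i = 0 := by
    intro i
    have := ha (Pi.single i 1, 0)
    simpa [sympB_apply, symp, Pi.single_apply] using this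
  ext i <;> simp [h1, h2]
lemma finrank_PV (n : ℕ) : finrank F2 (PV n) = 2 * n := by
  simp [finrank_prod, two_mul]
lemma card_submodule {n : ℕ} (W : Submodule F2 (PV n)) :
    Nat.card W = 2 ^ finrank F2 W := by
  classical
  have : Fintype W := Fintype.ofFinite _
  have := card_eq_pow_finrank (K := F2) (V := W)
  simpa [Nat.card_eq_fintype_card, ZMod.card] using this
lemma card_diff {n : ℕ} (W O : Submodule F2 (PV n)) (h : W ≤ O) :
    Nat.card {u : PV n // u ∈ O ∧ u ∉ W} =
      2 ^ finrank F2 O - 2 ^ finrank F2 W := by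
  classical
  have : {u : PV n // u ∈ O ∧ u ∉ W} ≃ ((O : Set (PV n)) \ (W : Set (PV n)) : Set (PV n)) :=
    Equiv.subtypeEquivRight (by intro x; simp [Set.mem_diff])
  rw [Nat.card_congr this, Nat.card_coe_set_eq,
    Set.ncard_diff (by exact_mod_cast h) (Set.toFinite _),
    ← Nat.card_coe_set_eq, ← Nat.card_coe_set_eq]
  rw [show Nat.card (O : Set (PV n)) = Nat.card O from rfl,
      show Nat.card (W : Set (PV n)) = Nat.card W from rfl,
      card_submodule, card_submodule]
lemma symp_self {n : ℕ} (a : PV n) : symp a a = 0 := by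
  simp [symp, mul_comm]
  rw [← Finset.sum_add_distrib]
  simp [mul_comm, CharTwo.add_self_eq_zero]
lemma mem_orth_span_iff {n : ℕ} (S : Set (PV n)) (x : PV n) :
    x ∈ (sympB n).orthogonal (span F2 S) ↔ ∀ y ∈ S, symp y x = 0 := by
  constructor
  · intro h y hy
    exact h y (subset_span hy)
  · intro h y hy
    induction hy using Submodule.span_induction with
    | mem z hz => exact h z hz
    | zero => simp [LinearMap.BilinForm.IsOrtho, sympB]
    | add a b _ _ ha hb =>
        show sympB n (a + b) x = 0
        rw [map_add, LinearMap.add_apply, ha, hb, add_zero]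
    | smul c a _ ha =>
        show sympB n (c • a) x = 0
        rw [map_smul, LinearMap.smul_apply, ha, smul_zero]
lemma span_le_orth {n : ℕ} (S : Set (PV n)) (h : ∀ x ∈ S, ∀ y ∈ S, symp x y = 0) :
    span F2 S ≤ (sympB n).orthogonal (span F2 S) := by
  rw [span_le]
  intro y hy
  rw [SetLike.mem_coe, mem_orth_span_iff]
  intro z hz
  exact h z hz y hy
lemma span_isotropic {n : ℕ} (S : Set (PV n)) (h : ∀ x ∈ S, ∀ y ∈ S, symp x y = 0)
    (x : PV n) (hx : x ∈ span F2 S) (y : PV n) (hy : y ∈ span F2 S) : symp x y = 0 := by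
  have := span_le_orth S h hy
  exact this x hx
def ITup (n k : ℕ) : Type :=
  {s : Fin k → PV n // LinearIndependent F2 s ∧ ∀ i j, symp (s i) (s j) = 0}
instance (n k : ℕ) : Finite (ITup n k) := by unfold ITup; infer_instance
noncomputable def extEquiv (n k : ℕ) :
    ITup n (k + 1) ≃
      Σ s : ITup n k, {u : PV n // u ∈ (sympB n).orthogonal (span F2 (Set.range s.1)) ∧
        u ∉ span F2 (Set.range s.1)} where
  toFun s := ⟨⟨Fin.tail s.1, (linearIndependent_fin_succ.mp s.2.1).1,
      fun i j => s.2.2 i.succ j.succ⟩,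
    ⟨s.1 0, by
      rw [mem_orth_span_iff]
      rintro y ⟨j, rfl⟩
      exact s.2.2 j.succ 0,
      (linearIndependent_fin_succ.mp s.2.1).2⟩⟩
  invFun p := ⟨Fin.cons p.2.1 p.1.1, by
      refine ⟨linearIndependent_fin_cons.mpr ⟨p.1.2.1, p.2.2.2⟩, ?_⟩
      have horth : ∀ j, symp (p.1.1 j) p.2.1 = 0 := fun j =>
        (mem_orth_span_iff _ _).mp p.2.2.1 _ ⟨j, rfl⟩
      intro i j
      refine Fin.cases ?_ ?_ i <;> [skip; intro i'] <;> refine Fin.cases ?_ ?_ j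
      · exact symp_self _
      · intro j'; simpa using (symp_comm _ _).trans (horth j')
      · simpa using horth i'
      · intro j'; simpa using p.1.2.2 i' j'⟩
  left_inv s := by
    apply Subtype.ext
    exact Fin.cons_self_tail s.1
  right_inv p := by
    rcases p with ⟨⟨s, hs⟩, ⟨u, hu⟩⟩
    apply Sigma.ext
    · apply Subtype.ext
      simp
    · refine (Subtype.heq_iff_coe_eq ?_).mpr (by simp)
      intro x
      simp

lemma finrank_span_ITup {n k : ℕ} (s : ITup n k) :
    finrank F2 (span F2 (Set.range s.1)) = k := by
  rw [finrank_span_eq_card s.2.1, Fintype.card_fin]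

lemma card_fiber {n k : ℕ} (s : ITup n k) :
    Nat.card {u : PV n // u ∈ (sympB n).orthogonal (span F2 (Set.range s.1)) ∧
        u ∉ span F2 (Set.range s.1)} = 2 ^ (2 * n - k) - 2 ^ k := by
  rw [card_diff _ _ (span_le_orth _ (by
    rintro x ⟨i, rfl⟩ y ⟨j, rfl⟩; exact s.2.2 i j))]
  rw [LinearMap.BilinForm.finrank_orthogonal sympB_nondeg,
    finrank_PV, finrank_span_ITup]

lemma card_ITup (n k : ℕ) :
    Nat.card (ITup n k) = ∏ i ∈ range k, (2 ^ (2 * n - i) - 2 ^ i) := by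
  induction k with
  | zero =>
    rw [range_zero, prod_empty]
    rw [Nat.card_eq_one_iff_unique]
    constructor
    · constructor
      intro a b
      apply Subtype.ext
      exact funext fun i => i.elim0
    · exact ⟨⟨fun i => i.elim0, linearIndependent_empty_type, fun i => i.elim0⟩⟩
  | succ k ih =>
    classical
    have : Fintype (ITup n k) := Fintype.ofFinite _
    rw [Nat.card_congr (extEquiv n k)]
    rw [Nat.card_eq_fintype_card, Fintype.card_sigma]
    have : ∀ s : ITup n k, Fintype.card {u : PV n //
        u ∈ (sympB n).orthogonal (span F2 (Set.range s.1)) ∧ u ∉ span F2 (Set.range s.1)} =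
        2 ^ (2 * n - k) - 2 ^ k := by
      intro s
      rw [← Nat.card_eq_fintype_card, card_fiber]
    rw [Finset.sum_congr rfl (fun s _ => this s), Finset.sum_const, smul_eq_mul,
      Finset.card_univ, ← Nat.card_eq_fintype_card, ih, prod_range_succ, mul_comm]

instance (n : ℕ) : Finite (Submodule F2 (PV n)) :=
  Finite.of_injective (fun W => (W : Set (PV n))) SetLike.coe_injective

def Fib {n k : ℕ} (V : Submodule F2 (PV n)) : Type :=
  {s : ITup n k // span F2 (Set.range s.1) = V}

instance {n k : ℕ} (V : Submodule F2 (PV n)) : Finite (Fib (k := k) V) := by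
  unfold Fib; infer_instance

noncomputable def sigmaEquiv (n k : ℕ) :
    ITup n k ≃ Σ V : Lset n k, Fib (k := k) V.1 where
  toFun s := ⟨⟨span F2 (Set.range s.1),
      ⟨fun x hx y hy => span_isotropic _ (by rintro a ⟨i, rfl⟩ b ⟨j, rfl⟩; exact s.2.2 i j) x hx y hy,
        finrank_span_ITup s⟩⟩, ⟨s, rfl⟩⟩
  invFun p := p.2.1
  left_inv s := rfl
  right_inv p := by
    rcases p with ⟨⟨V, hV⟩, ⟨s, hs⟩⟩
    apply Sigma.ext
    · exact Subtype.ext hs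
    · refine (Subtype.heq_iff_coe_eq ?_).mpr rfl
      intro x
      simp [hs]

noncomputable def fibEquiv {n k : ℕ} (V : Submodule F2 (PV n)) (hV : V ∈ Lset n k) :
    Fib (k := k) V ≃ {t : Fin k → V // LinearIndependent F2 t} where
  toFun p := ⟨fun i => ⟨p.1.1 i, by
      have := subset_span (R := F2) (s := Set.range p.1.1) ⟨i, rfl⟩
      rwa [p.2] at this⟩,
    LinearIndependent.of_comp V.subtype (by exact p.1.2.1)⟩
  invFun t := ⟨⟨V.subtype ∘ t.1,
      t.2.map' V.subtype (Submodule.ker_subtype V),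
      fun i j => hV.1 _ (t.1 i).2 _ (t.1 j).2⟩, by
    apply eq_of_le_of_finrank_le
    · rw [span_le]; rintro x ⟨i, rfl⟩; exact (t.1 i).2
    · rw [finrank_span_eq_card (t.2.map' V.subtype (Submodule.ker_subtype V)),
        Fintype.card_fin, hV.2]⟩
  left_inv p := by apply Subtype.ext; apply Subtype.ext; rfl
  right_inv t := by apply Subtype.ext; rfl

lemma card_fib {n k : ℕ} (V : Submodule F2 (PV n)) (hV : V ∈ Lset n k) :
    Nat.card (Fib (k := k) V) = ∏ i ∈ range k, (2 ^ k - 2 ^ i) := by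
  rw [Nat.card_congr (fibEquiv V hV)]
  have hk : k ≤ finrank F2 V := le_of_eq hV.2.symm
  rw [card_linearIndependent hk]
  rw [ZMod.card, hV.2, ← Finset.prod_range fun i => (2 ^ k - 2 ^ i)]

lemma card_count (n k : ℕ) :
    Nat.card (ITup n k) = Nat.card (Lset n k) * ∏ i ∈ range k, (2 ^ k - 2 ^ i) := by
  classical
  have : Fintype (Lset n k) := Fintype.ofFinite _
  have : ∀ V : Lset n k, Fintype (Fib (k := k) V.1) := fun _ => Fintype.ofFinite _
  rw [Nat.card_congr (sigmaEquiv n k), Nat.card_eq_fintype_card, Fintype.card_sigma]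
  have : ∀ V : Lset n k, Fintype.card (Fib (k := k) V.1) = ∏ i ∈ range k, (2 ^ k - 2 ^ i) := by
    intro V
    rw [← Nat.card_eq_fintype_card, card_fib V.1 V.2]
  rw [Finset.sum_congr rfl (fun V _ => this V), Finset.sum_const, smul_eq_mul,
    Finset.card_univ, Nat.card_eq_fintype_card]

/-- The number of `k`-dimensional isotropic subspaces of `F2^{2n}` equals
`∏_{i=0}^{k−1} (2^{2n−i} − 2^i)/(2^k − 2^i)`. -/
theorem card_Lset_eq :
    ∀ n : ℕ, 1 ≤ n → ∀ k : ℕ, k ≤ n →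
      (Nat.card (Lset n k) : ℚ) =
        ∏ i ∈ Finset.range k,
          ((2 : ℚ) ^ (2 * n - i) - 2 ^ i) / ((2 : ℚ) ^ k - 2 ^ i) := by
  intro n hn k hk
  have hN : Nat.card (Lset n k) * ∏ i ∈ range k, (2 ^ k - 2 ^ i) =
      ∏ i ∈ range k, (2 ^ (2 * n - i) - 2 ^ i) := by
    rw [← card_count, card_ITup]
  have hden : ∀ i ∈ range k, (((2 ^ k - 2 ^ i : ℕ) : ℚ)) = (2 : ℚ) ^ k - 2 ^ i := by
    intro i hi
    have h : (2 : ℕ) ^ i ≤ 2 ^ k := Nat.pow_le_pow_right (by norm_num) (mem_range.mp hi).le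
    push_cast [h]
    ring
  have hnum : ∀ i ∈ range k, (((2 ^ (2 * n - i) - 2 ^ i : ℕ) : ℚ)) =
      (2 : ℚ) ^ (2 * n - i) - 2 ^ i := by
    intro i hi
    have hi' := mem_range.mp hi
    have h : (2 : ℕ) ^ i ≤ 2 ^ (2 * n - i) := Nat.pow_le_pow_right (by norm_num) (by omega)
    push_cast [h]
    ring
  have hQ : (Nat.card (Lset n k) : ℚ) * ∏ i ∈ range k, ((2 : ℚ) ^ k - 2 ^ i) =
      ∏ i ∈ range k, ((2 : ℚ) ^ (2 * n - i) - 2 ^ i) := by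
    have := congrArg (Nat.cast : ℕ → ℚ) hN
    rw [Nat.cast_mul, Nat.cast_prod, Nat.cast_prod] at this
    rw [Finset.prod_congr rfl hden, Finset.prod_congr rfl hnum] at this
    exact this
  have hdne : ∀ i ∈ range k, ((2 : ℚ) ^ k - 2 ^ i) ≠ 0 := by
    intro i hi
    have : (2 : ℚ) ^ i < 2 ^ k := by
      apply pow_lt_pow_right₀ (by norm_num) (mem_range.mp hi)
    exact sub_ne_zero.mpr (ne_of_lt this).symm
  rw [Finset.prod_div_distrib]
  rw [eq_div_iff (Finset.prod_ne_zero_iff.mpr hdne)]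
  exact hQ
end
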